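/- Let 0 ≤ r ≤ K < N and let M be a real (N−r+1)×(N−r+1) matrix such that P_K(A₊^{ℓ}W) = Σ_{k=0}^{N−r} M(k,ℓ)·A₊^{k}W for every W ∈ W_r and every 0 ≤ ℓ ≤ N−r. Suppose λ ∈ ℝ and the real numbers c_0, …, c_{K−r} satisfy Σ_{ℓ=0}^{K−r} M(k,ℓ)·c_ℓ = λ·c_k for every 0 ≤ k ≤ K−r. Then for every W ∈ W_r, the vertex function V = Σ_{k=0}^{K−r} c_k·A₊^{k}W satisfies Q_K P_K Q_K V = λV, and the vertex function HV defined by (HV)(R) = Σ_S (−1)^{|R∩S|} V(S) satisfies P_K Q_K P_K (HV) = λ·HV. -/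

import Mathlib

open Finset

/-- Outer adjacency operator on vertex functions of the Boolean hypercube `B_N`:
`(A₊V)(S) = Σ_{s∈S} V(S∖{s})`. -/
def Aplus (N : ℕ) (V : Finset (Fin N) → ℝ) : Finset (Fin N) → ℝ :=
  fun S => ∑ s ∈ S, V (S.erase s)

/-- Inner adjacency operator: `(A₋V)(R) = Σ_{b∉R} V(R∪{b})`. -/
def Aminus (N : ℕ) (V : Finset (Fin N) → ℝ) : Finset (Fin N) → ℝ :=
  fun R => ∑ b ∈ Rᶜ, V (insert b R)

/-- Adjacency operator `A = A₊ + A₋`. -/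
def Adj (N : ℕ) (V : Finset (Fin N) → ℝ) : Finset (Fin N) → ℝ :=
  fun S => Aplus N V S + Aminus N V S

/-- Graph Laplacian `L = N·I − A`. -/
def Lap (N : ℕ) (V : Finset (Fin N) → ℝ) : Finset (Fin N) → ℝ :=
  fun S => (N : ℝ) * V S - Adj N V S

/-- Inner product `⟨V,U⟩ = Σ_S V(S)U(S)` on vertex functions. -/
def inner' (N : ℕ) (V U : Finset (Fin N) → ℝ) : ℝ :=
  ∑ S : Finset (Fin N), V S * U S

/-- `V` is supported on the Hamming sphere `Σ_r` (vanishes off sets of cardinality `r`). -/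
def suppOn (N r : ℕ) (V : Finset (Fin N) → ℝ) : Prop :=
  ∀ S : Finset (Fin N), S.card ≠ r → V S = 0

/-- Membership in `W_r`: supported on `Σ_r` and orthogonal to `A₊ℓ²(Σ_{r−1})`.
(For `r = 0` the orthogonality condition is vacuous, so `W_0 = ℓ²(Σ_0)`.) -/
def memW (N r : ℕ) (W : Finset (Fin N) → ℝ) : Prop :=
  suppOn N r W ∧
    ∀ U : Finset (Fin N) → ℝ, suppOn N (r - 1) U → inner' N W (Aplus N U) = 0

/-- `m(r,k) = Σ_{j=0}^{k} (N − 2(r+j))`. -/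
def mcoef (N r k : ℕ) : ℝ :=
  ∑ j ∈ Finset.range (k + 1), ((N : ℝ) - 2 * ((r : ℝ) + (j : ℝ)))

/-- Hadamard vector `H_S(R) = (−1)^{|R∩S|}`. -/
def Had (N : ℕ) (S R : Finset (Fin N)) : ℝ := (-1 : ℝ) ^ (R ∩ S).card

/-- Spatial truncation `Q_K`: restriction to the Hamming ball of radius `K`. -/
def QK (N K : ℕ) (V : Finset (Fin N) → ℝ) : Finset (Fin N) → ℝ :=
  fun S => if S.card ≤ K then V S else 0

/-- Spectral projection `P_K`: orthogonal projection onto `span{H_S : |S| ≤ K}`,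
given by `P_K V = Σ_{|S|≤K} (⟨V,H_S⟩/2^N)·H_S`. -/
noncomputable def PK (N K : ℕ) (V : Finset (Fin N) → ℝ) : Finset (Fin N) → ℝ :=
  fun R => ∑ S ∈ Finset.univ.filter (fun S : Finset (Fin N) => S.card ≤ K),
    (inner' N V (Had N S) / 2 ^ N) * Had N S R

/-- Diagonal operator `(TV)(R) = √(2|R|)·V(R)`. -/
noncomputable def Tdiag (N : ℕ) (V : Finset (Fin N) → ℝ) : Finset (Fin N) → ℝ :=
  fun R => Real.sqrt (2 * (R.card : ℝ)) * V R

/-- Boolean difference operator conjugated by the Hadamard transform: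
`HBDO = T(αI − L)T + βL`. -/
noncomputable def HBDO (N : ℕ) (α β : ℝ) (V : Finset (Fin N) → ℝ) : Finset (Fin N) → ℝ :=
  fun R => Tdiag N (fun S => α * Tdiag N V S - Lap N (Tdiag N V) S) R + β * Lap N V R

/-- Hadamard transform `(HV)(R) = Σ_S (−1)^{|R∩S|} V(S)`. -/
def Hmat (N : ℕ) (V : Finset (Fin N) → ℝ) : Finset (Fin N) → ℝ :=
  fun R => ∑ S : Finset (Fin N), Had N S R * V S

/-- Commutator `C = A₋A₊ − A₊A₋`. -/
def Cop (N : ℕ) (V : Finset (Fin N) → ℝ) : Finset (Fin N) → ℝ :=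
  fun S => Aminus N (Aplus N V) S - Aplus N (Aminus N V) S


open symmDiff in
private lemma sum_neg_one_pow' (N : ℕ) (D : Finset (Fin N)) :
    ∑ S : Finset (Fin N), (-1:ℝ) ^ (D ∩ S).card = if D = ∅ then 2 ^ N else 0 := by
  have h := Finset.prod_add (fun i : Fin N => if i ∈ D then (-1:ℝ) else 1)
      (fun _ => 1) Finset.univ
  simp only [Finset.prod_const_one, mul_one, Finset.powerset_univ] at h
  have hprod : ∀ t : Finset (Fin N),
      (∏ i ∈ t, (if i ∈ D then (-1:ℝ) else 1)) = (-1:ℝ) ^ (D ∩ t).card := by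
    intro t
    rw [← Finset.prod_filter_mul_prod_filter_not t (· ∈ D)]
    have h1 : (∏ i ∈ t.filter (· ∈ D), (if i ∈ D then (-1:ℝ) else 1))
        = (-1:ℝ) ^ (D ∩ t).card := by
      rw [Finset.prod_congr rfl (fun i hi => if_pos (Finset.mem_filter.mp hi).2),
        Finset.prod_const, Finset.filter_mem_eq_inter, Finset.inter_comm]
    have h2 : (∏ i ∈ t.filter (¬ · ∈ D), (if i ∈ D then (-1:ℝ) else 1)) = 1 := by
      rw [Finset.prod_congr rfl (fun i hi => if_neg (Finset.mem_filter.mp hi).2)]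
      exact Finset.prod_const_one
    rw [h1, h2, mul_one]
  rw [Finset.sum_congr rfl (fun t _ => hprod t)] at h
  rw [← h]
  by_cases hD : D = ∅
  · subst hD
    simp [Finset.card_univ]
    norm_num
  · rw [if_neg hD]
    obtain ⟨d, hd⟩ := Finset.nonempty_iff_ne_empty.mpr hD
    exact Finset.prod_eq_zero (Finset.mem_univ d) (by simp [hd])

open symmDiff in
private lemma card_parity' (N : ℕ) (A B S : Finset (Fin N)) :
    (-1:ℝ) ^ (A ∩ S).card * (-1:ℝ) ^ (B ∩ S).card = (-1:ℝ) ^ ((A ∆ B) ∩ S).card := by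
  have hdist : (A ∆ B) ∩ S = (A ∩ S) ∆ (B ∩ S) := inf_symmDiff_distrib_right A B S
  have hcard : (A ∩ S).card + (B ∩ S).card
      = ((A ∩ S) ∆ (B ∩ S)).card + 2 * ((A ∩ S) ∩ (B ∩ S)).card := by
    have h1 := Finset.card_union_add_card_inter (A ∩ S) (B ∩ S)
    have h2 : ((A ∩ S) ∆ (B ∩ S)).card
        = ((A ∩ S) ∪ (B ∩ S)).card - ((A ∩ S) ∩ (B ∩ S)).card := by
      rw [symmDiff_eq_sup_sdiff_inf, Finset.sup_eq_union, Finset.inf_eq_inter]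
      exact Finset.card_sdiff_of_subset Finset.inter_subset_union
    have h3 := Finset.card_le_card (Finset.inter_subset_union (s := A ∩ S) (t := B ∩ S))
    omega
  rw [← pow_add, hcard, hdist, pow_add, pow_mul, neg_one_sq, one_pow, mul_one]

open symmDiff in
private lemma had_orth' (N : ℕ) (R T : Finset (Fin N)) :
    ∑ S : Finset (Fin N), Had N S R * Had N T S = if R = T then (2:ℝ) ^ N else 0 := by
  have hpt : ∀ S : Finset (Fin N), Had N S R * Had N T S
      = (-1:ℝ) ^ ((R ∆ T) ∩ S).card := by
    intro S
    rw [Had, Had, Finset.inter_comm S T]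
    exact card_parity' N R T S
  rw [Finset.sum_congr rfl (fun S _ => hpt S), sum_neg_one_pow']
  congr 1
  simp [symmDiff_eq_bot]

private lemma Hmat_smul' (N : ℕ) (a : ℝ) (V : Finset (Fin N) → ℝ) :
    Hmat N (a • V) = a • Hmat N V := by
  funext R
  simp only [Hmat, Pi.smul_apply, smul_eq_mul, Finset.mul_sum]
  exact Finset.sum_congr rfl fun S _ => by ring

private lemma Hmat_Hmat' (N : ℕ) (V : Finset (Fin N) → ℝ) :
    Hmat N (Hmat N V) = ((2:ℝ) ^ N) • V := by
  funext R
  simp only [Hmat, Pi.smul_apply, smul_eq_mul, Finset.mul_sum]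
  rw [Finset.sum_comm]
  have step : ∀ T : Finset (Fin N),
      (∑ S : Finset (Fin N), Had N S R * (Had N T S * V T))
        = (if R = T then (2:ℝ) ^ N else 0) * V T := by
    intro T
    rw [← had_orth' N R T, Finset.sum_mul]
    exact Finset.sum_congr rfl fun S _ => by ring
  rw [Finset.sum_congr rfl fun T _ => step T]
  simp [ite_mul]

private lemma inner'_eq_Hmat (N : ℕ) (V : Finset (Fin N) → ℝ) (S : Finset (Fin N)) :
    inner' N V (Had N S) = Hmat N V S := by
  simp only [inner', Hmat]
  exact Finset.sum_congr rfl fun T _ => by rw [Had, Had, Finset.inter_comm, mul_comm]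

private lemma PK_eq_conj (N K : ℕ) (V : Finset (Fin N) → ℝ) :
    PK N K V = ((2:ℝ) ^ N)⁻¹ • Hmat N (QK N K (Hmat N V)) := by
  funext R
  simp only [PK, Pi.smul_apply, smul_eq_mul, Hmat, QK, Finset.mul_sum]
  rw [Finset.sum_filter]
  refine Finset.sum_congr rfl fun S _ => ?_
  rw [inner'_eq_Hmat]
  by_cases h : S.card ≤ K
  · rw [if_pos h, if_pos h, Hmat]
    field_simp
  · rw [if_neg h, if_neg h, mul_zero, mul_zero]

private lemma QK_smul' (N K : ℕ) (a : ℝ) (V : Finset (Fin N) → ℝ) :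
    QK N K (a • V) = a • QK N K V := by
  funext S
  simp only [QK, Pi.smul_apply, smul_eq_mul]
  split <;> simp

private lemma QK_sum' (N K : ℕ) {ι : Type*} (s : Finset ι) (f : ι → Finset (Fin N) → ℝ) :
    QK N K (∑ i ∈ s, f i) = ∑ i ∈ s, QK N K (f i) := by
  funext S
  simp only [QK, Finset.sum_apply]
  by_cases h : S.card ≤ K
  · simp only [if_pos h]
  · simp only [if_neg h, Finset.sum_const_zero]

private lemma inner'_smul (N : ℕ) (a : ℝ) (V U : Finset (Fin N) → ℝ) :
    inner' N (a • V) U = a * inner' N V U := by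
  simp only [inner', Pi.smul_apply, smul_eq_mul, Finset.mul_sum]
  exact Finset.sum_congr rfl fun S _ => by ring

private lemma inner'_sum (N : ℕ) {ι : Type*} (s : Finset ι) (f : ι → Finset (Fin N) → ℝ)
    (U : Finset (Fin N) → ℝ) :
    inner' N (∑ i ∈ s, f i) U = ∑ i ∈ s, inner' N (f i) U := by
  simp only [inner', Finset.sum_apply, Finset.sum_mul]
  rw [Finset.sum_comm]

private lemma PK_smul' (N K : ℕ) (a : ℝ) (V : Finset (Fin N) → ℝ) :
    PK N K (a • V) = a • PK N K V := by
  funext R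
  simp only [PK, Pi.smul_apply, smul_eq_mul, inner'_smul, Finset.mul_sum]
  exact Finset.sum_congr rfl fun S _ => by ring

private lemma PK_sum' (N K : ℕ) {ι : Type*} (s : Finset ι) (f : ι → Finset (Fin N) → ℝ) :
    PK N K (∑ i ∈ s, f i) = ∑ i ∈ s, PK N K (f i) := by
  funext R
  simp only [PK, inner'_sum, Finset.sum_apply, Finset.sum_div, Finset.sum_mul]
  rw [Finset.sum_comm]

private lemma suppOn_aplus' (N r : ℕ) (V : Finset (Fin N) → ℝ) (h : suppOn N r V) :
    suppOn N (r + 1) (Aplus N V) := by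
  intro S hS
  refine Finset.sum_eq_zero fun s hs => ?_
  apply h
  have h1 : (S.erase s).card = S.card - 1 := Finset.card_erase_of_mem hs
  have h2 : 1 ≤ S.card := Finset.card_pos.mpr ⟨s, hs⟩
  omega

private lemma suppOn_iter' (N r : ℕ) (V : Finset (Fin N) → ℝ) (h : suppOn N r V) (k : ℕ) :
    suppOn N (r + k) ((Aplus N)^[k] V) := by
  induction k with
  | zero => simpa using h
  | succ n ih =>
      rw [Function.iterate_succ_apply']
      exact suppOn_aplus' N (r + n) _ ih

private lemma QK_eq_self' (N K m : ℕ) (V : Finset (Fin N) → ℝ) (h : suppOn N m V)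
    (hm : m ≤ K) : QK N K V = V := by
  funext S
  simp only [QK]
  split
  · rfl
  · exact (h S (by omega)).symm

private lemma QK_eq_zero' (N K m : ℕ) (V : Finset (Fin N) → ℝ) (h : suppOn N m V)
    (hm : K < m) : QK N K V = 0 := by
  funext S
  simp only [QK, Pi.zero_apply]
  split
  · exact h S (by omega)
  · rfl

/-- if `M` represents `P_K` on `V_r` and `(c_0,…,c_{K−r})` is a
`λ`-eigenvector of the principal `(K−r+1)`-minor of `M`, then for every `W ∈ W_r`,
`V = Σ_{k=0}^{K−r} c_k·A₊^{k}W` satisfies `Q_K P_K Q_K V = λV`, and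
`HV` satisfies `P_K Q_K P_K (HV) = λ·HV`. -/
theorem qpq_pqp_eigenvectors (N r K : ℕ) (hN : 1 ≤ N) (hrK : r ≤ K) (hK : K < N)
    (M : ℕ → ℕ → ℝ)
    (hM : ∀ W : Finset (Fin N) → ℝ, memW N r W → ∀ ℓ ≤ N - r,
      PK N K ((Aplus N)^[ℓ] W)
        = ∑ k ∈ Finset.range (N - r + 1), M k ℓ • (Aplus N)^[k] W)
    (lam : ℝ) (c : ℕ → ℝ)
    (heig : ∀ k ≤ K - r, ∑ ℓ ∈ Finset.range (K - r + 1), M k ℓ * c ℓ = lam * c k)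
    (W : Finset (Fin N) → ℝ) (hW : memW N r W) :
    QK N K (PK N K (QK N K (∑ k ∈ Finset.range (K - r + 1), c k • (Aplus N)^[k] W)))
        = lam • ∑ k ∈ Finset.range (K - r + 1), c k • (Aplus N)^[k] W ∧
    PK N K (QK N K (PK N K
        (Hmat N (∑ k ∈ Finset.range (K - r + 1), c k • (Aplus N)^[k] W))))
      = lam • Hmat N (∑ k ∈ Finset.range (K - r + 1), c k • (Aplus N)^[k] W) := by
  set X : ℕ → (Finset (Fin N) → ℝ) := fun k => (Aplus N)^[k] W with hX
  set V : Finset (Fin N) → ℝ := ∑ k ∈ Finset.range (K - r + 1), c k • X k with hV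
  have hsupp : ∀ k, suppOn N (r + k) (X k) := fun k => suppOn_iter' N r W hW.1 k
  -- Q_K V = V
  have hQV : QK N K V = V := by
    rw [hV, QK_sum']
    refine Finset.sum_congr rfl fun k hk => ?_
    have hk' : k ≤ K - r := by
      have := Finset.mem_range.mp hk; omega
    rw [QK_smul', QK_eq_self' N K (r + k) _ (hsupp k) (by omega)]
  -- P_K V
  have hPV : PK N K V = ∑ ℓ ∈ Finset.range (K - r + 1),
      c ℓ • ∑ k ∈ Finset.range (N - r + 1), M k ℓ • X k := by
    rw [hV, PK_sum']
    refine Finset.sum_congr rfl fun ℓ hℓ => ?_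
    have hℓ' : ℓ ≤ N - r := by
      have := Finset.mem_range.mp hℓ; omega
    rw [PK_smul', hM W hW ℓ hℓ']
  -- Q_K of that
  have hQ2 : QK N K (∑ ℓ ∈ Finset.range (K - r + 1),
        c ℓ • ∑ k ∈ Finset.range (N - r + 1), M k ℓ • X k)
      = ∑ ℓ ∈ Finset.range (K - r + 1),
        c ℓ • ∑ k ∈ Finset.range (K - r + 1), M k ℓ • X k := by
    rw [QK_sum']
    refine Finset.sum_congr rfl fun ℓ _ => ?_
    rw [QK_smul', QK_sum']
    congr 1
    have hsub : Finset.range (K - r + 1) ⊆ Finset.range (N - r + 1) :=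
      Finset.range_subset_range.mpr (by omega)
    rw [← Finset.sum_subset hsub]
    · refine Finset.sum_congr rfl fun k hk => ?_
      have hk' : k ≤ K - r := by have := Finset.mem_range.mp hk; omega
      rw [QK_smul', QK_eq_self' N K (r + k) _ (hsupp k) (by omega)]
    · intro k _ hk
      have hk' : K - r + 1 ≤ k := by
        by_contra hc
        exact hk (Finset.mem_range.mpr (by omega))
      rw [QK_smul', QK_eq_zero' N K (r + k) _ (hsupp k) (by omega), smul_zero]
  -- combine to the eigenvalue equation
  have h1 : QK N K (PK N K (QK N K V)) = lam • V := by
    rw [hQV, hPV, hQ2]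
    calc (∑ ℓ ∈ Finset.range (K - r + 1),
          c ℓ • ∑ k ∈ Finset.range (K - r + 1), M k ℓ • X k)
        = ∑ k ∈ Finset.range (K - r + 1),
            (∑ ℓ ∈ Finset.range (K - r + 1), M k ℓ * c ℓ) • X k := by
          simp only [Finset.smul_sum, smul_smul]
          rw [Finset.sum_comm]
          refine Finset.sum_congr rfl fun k _ => ?_
          rw [← Finset.sum_smul]
          congr 1
          exact Finset.sum_congr rfl fun ℓ _ => mul_comm _ _
      _ = ∑ k ∈ Finset.range (K - r + 1), (lam * c k) • X k := by
          refine Finset.sum_congr rfl fun k hk => ?_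
          have hk' : k ≤ K - r := by have := Finset.mem_range.mp hk; omega
          rw [heig k hk']
      _ = lam • V := by
          rw [hV, Finset.smul_sum]
          exact Finset.sum_congr rfl fun k _ => mul_smul _ _ _
  refine ⟨h1, ?_⟩
  have h2N : ((2:ℝ) ^ N) ≠ 0 := by positivity
  have e1 : PK N K (Hmat N V) = Hmat N (QK N K V) := by
    rw [PK_eq_conj, Hmat_Hmat', QK_smul', Hmat_smul', smul_smul,
      inv_mul_cancel₀ h2N, one_smul]
  calc PK N K (QK N K (PK N K (Hmat N V)))
      = PK N K (QK N K (Hmat N (QK N K V))) := by rw [e1]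
    _ = ((2:ℝ) ^ N)⁻¹ • Hmat N (QK N K (Hmat N (QK N K (Hmat N (QK N K V))))) :=
        PK_eq_conj N K _
    _ = Hmat N (QK N K (((2:ℝ) ^ N)⁻¹ • Hmat N (QK N K (Hmat N (QK N K V))))) := by
        rw [QK_smul', Hmat_smul']
    _ = Hmat N (QK N K (PK N K (QK N K V))) := by rw [← PK_eq_conj]
    _ = Hmat N (lam • V) := by rw [h1]
    _ = lam • Hmat N V := Hmat_smul' N lam V
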